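/- Schensted insertion and deletion are mutually inverse: for any semistandard tableau T and integer x, if Insert(T, x) = (T', i) then Delete(T', i) = (T, x), and conversely if Delete(T', i) = (T, x) (defined when row i of T' is strictly longer than row i+1) then Insert(T, x) = (T', i). -/

import Mathlib

/-- Tableaux are represented as lists of rows of positive integers.
`IsSSYT T` : rows weakly increasing, columns strictly increasing,
row lengths weakly decreasing, no empty rows (English notation). -/
def IsSSYT (T : List (List ℕ)) : Prop :=
  (∀ r ∈ T, List.Pairwise (· ≤ ·) r) ∧
  (∀ (i j a b : ℕ), (T.getD i [])[j]? = some a → (T.getD (i+1) [])[j]? = some b → a < b) ∧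
  (∀ i, (T.getD (i+1) []).length ≤ (T.getD i []).length) ∧
  [] ∉ T

/-- Schensted row insertion.  Returns the new tableau together with the
(0-based) index of the row in which a new box was added. -/
def rinsert : List (List ℕ) → ℕ → List (List ℕ) × ℕ
  | [], x => ([[x]], 0)
  | r :: rs, x =>
    match r.findIdx? (fun t => x < t) with
    | none => ((r ++ [x]) :: rs, 0)
    | some j =>
      let y := r.getD j 0
      let p := rinsert rs y
      ((r.set j x) :: p.1, p.2 + 1)

/-- Reverse bumping through the rows above (given in reversed order). -/
def revBump : List (List ℕ) → ℕ → List (List ℕ) × ℕ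
  | [], x => ([], x)
  | r :: rs, x =>
    let k := (r.takeWhile (· < x)).length
    if k = 0 then (r :: rs, x)
    else
      let y := r.getD (k - 1) 0
      let p := revBump rs y
      ((r.set (k - 1) x) :: p.1, p.2)

/-- Schensted deletion: remove the last box of row `i` and reverse-bump,
returning the new tableau and the ejected entry. -/
def schDelete (T : List (List ℕ)) (i : ℕ) : List (List ℕ) × ℕ :=
  let r := T.getD i []
  let x := r.getLastD 0
  let r' := r.dropLast
  let p := revBump (T.take i).reverse x
  (p.1.reverse ++ (if r' = [] then ([] : List (List ℕ)) else [r']) ++ T.drop (i + 1), p.2)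

/-- One step of `Carray2Dtableau`: insert `b` and append `a` at the end of
the next row. -/
def c2dStep (T : List (List ℕ)) (p : ℕ × ℕ) : List (List ℕ) :=
  let q := rinsert T p.2
  if q.2 + 1 < q.1.length then q.1.set (q.2 + 1) ((q.1.getD (q.2 + 1) []) ++ [p.1])
  else q.1 ++ [[p.1]]

/-- The map `Carray2Dtableau` from c-arrays (lists of columns `(aᵢ, bᵢ)`) to
tableaux of double shape. -/
def c2d (S : List (ℕ × ℕ)) : List (List ℕ) := S.foldl c2dStep []

/-- One step of `Dtableau2Carray`: extract the maximal entry `x` (occurrence of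
maximal column, at the end of row `i`), apply `schDelete` at row `i` ejecting `y`,
and remove the corresponding entry of row `i-1`. -/
def d2cStep (T : List (List ℕ)) : List (List ℕ) × (ℕ × ℕ) :=
  let x := T.flatten.foldr max 0
  let cand := (List.range T.length).filter (fun i => (T.getD i []).getLastD 0 = x)
  let i := cand.foldl (fun acc i =>
      if (T.getD acc []).length < (T.getD i []).length then i else acc) 0
  let j := (T.getD i []).length - 1
  let p := schDelete T i
  let T2 := p.1.set (i - 1) ((p.1.getD (i - 1) []).eraseIdx j)
  (T2.filter (fun r => r ≠ []), (x, p.2))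

def d2cAux : ℕ → List (List ℕ) → List (ℕ × ℕ)
  | 0, _ => []
  | n + 1, T =>
    if T = [] then []
    else
      let p := d2cStep T
      d2cAux n p.1 ++ [p.2]

/-- The map `Dtableau2Carray`. -/
def d2c (T : List (List ℕ)) : List (ℕ × ℕ) := d2cAux T.flatten.length T

/-- Content of a two-rowed array: multiplicity of each value among all entries. -/
def cntA (S : List (ℕ × ℕ)) (v : ℕ) : ℕ := (S.map Prod.fst ++ S.map Prod.snd).count v

/-- Content of a tableau. -/
def cntT (T : List (List ℕ)) (v : ℕ) : ℕ := T.flatten.count v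

/-- A c-array: each column `(aᵢ, bᵢ)` satisfies `bᵢ < aᵢ` and the columns are
weakly increasing in the lexicographic order. -/
def IsCArray (S : List (ℕ × ℕ)) : Prop :=
  (∀ p ∈ S, p.2 < p.1) ∧
  List.Chain' (fun p q : ℕ × ℕ => p.1 < q.1 ∨ (p.1 = q.1 ∧ p.2 ≤ q.2)) S

/-- Normality: every value occurs at most twice, and the bottom row contains no
weakly increasing subsequence of length 3. -/
def IsNormal (S : List (ℕ × ℕ)) : Prop :=
  (∀ v, cntA S v ≤ 2) ∧
  ∀ t : List ℕ, t.Sublist (S.map Prod.snd) → t.Pairwise (· ≤ ·) → t.length ≤ 2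

/-- A double shape: each row length is repeated an even number of times. -/
def IsDoubleShape (T : List (List ℕ)) : Prop :=
  ∃ L : List ℕ, T.map List.length = L.flatMap (fun a => [a, a])


namespace SchenstedAux

lemma set_self (l : List ℕ) (i : ℕ) (h : i < l.length) : l.set i l[i] = l := by
  apply List.ext_getElem (by simp)
  intro n h1 h2
  rw [List.getElem_set]
  split <;> simp_all

lemma getD_set_self {l : List ℕ} {i : ℕ} (h : i < l.length) (a : ℕ) :
    (l.set i a).getD i 0 = a := by
  rw [List.getD_eq_getElem _ _ (by simpa using h), List.getElem_set, if_pos rfl]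

lemma getD_set_ne {l : List ℕ} {i t : ℕ} (h : i ≠ t) (a : ℕ) :
    (l.set i a).getD t 0 = l.getD t 0 := by
  by_cases ht : t < l.length
  · rw [List.getD_eq_getElem _ _ (by simpa using ht), List.getD_eq_getElem _ _ ht,
      List.getElem_set, if_neg h]
  · rw [List.getD_eq_default _ _ (by simpa using Nat.le_of_not_lt ht),
      List.getD_eq_default _ _ (Nat.le_of_not_lt ht)]

lemma tw_prop {p : ℕ → Bool} {l : List ℕ} {t : ℕ} (h : t < (l.takeWhile p).length) :
    p (l.getD t 0) = true := by
  induction l generalizing t with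
  | nil => simp at h
  | cons a l ih =>
    by_cases hp : p a = true
    · rw [List.takeWhile_cons_of_pos hp] at h
      match t with
      | 0 => simpa using hp
      | t + 1 =>
        rw [List.getD_cons_succ]
        exact ih (Nat.lt_of_succ_lt_succ h)
    · rw [List.takeWhile_cons_of_neg hp] at h
      simp at h

lemma tw_boundary {p : ℕ → Bool} {l : List ℕ} (h : (l.takeWhile p).length < l.length) :
    p (l.getD (l.takeWhile p).length 0) = false := by
  induction l with
  | nil => simp at h
  | cons a l ih =>
    by_cases hp : p a = true
    · rw [List.takeWhile_cons_of_pos hp] at h ⊢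
      rw [List.length_cons] at h
      rw [List.length_cons, List.getD_cons_succ]
      exact ih (Nat.lt_of_succ_lt_succ h)
    · rw [List.takeWhile_cons_of_neg hp]
      simpa using hp

lemma tw_le (p : ℕ → Bool) (l : List ℕ) : (l.takeWhile p).length ≤ l.length :=
  List.Sublist.length_le (List.takeWhile_sublist p)

lemma getLastD_eq_getD {l : List ℕ} (h : l ≠ []) :
    l.getLastD 0 = l.getD (l.length - 1) 0 := by
  rcases List.eq_nil_or_concat l with rfl | ⟨L, b, rfl⟩
  · exact absurd rfl h
  · rw [List.concat_eq_append, List.getLastD_concat]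
    have hlen : (L ++ [b]).length - 1 = L.length := by simp
    rw [hlen, List.getD_eq_getElem _ _ (by simp)]
    exact (List.getElem_concat_length (l := L) (a := b) rfl _).symm

lemma findIdx?_eq_some_of {p : ℕ → Bool} {l : List ℕ} {k : ℕ} (hk : k < l.length)
    (h1 : p (l.getD k 0) = true) (h2 : ∀ t, t < k → p (l.getD t 0) = false) :
    l.findIdx? p = some k := by
  rw [List.findIdx?_eq_some_iff_findIdx_eq]
  refine ⟨hk, (List.findIdx_eq hk).mpr ⟨?_, ?_⟩⟩
  · rwa [List.getD_eq_getElem _ _ hk] at h1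
  · intro j hj
    have := h2 j (by omega)
    rwa [List.getD_eq_getElem _ _ (by omega)] at this

lemma row_mono {r : List ℕ} (h : List.Pairwise (· ≤ ·) r) {s t : ℕ} (hst : s ≤ t)
    (ht : t < r.length) : r.getD s 0 ≤ r.getD t 0 := by
  rcases Nat.eq_or_lt_of_le hst with rfl | hlt
  · exact le_rfl
  · rw [List.getD_eq_getElem _ _ (by omega), List.getD_eq_getElem _ _ ht]
    exact List.pairwise_iff_getElem.mp h s t (by omega) ht hlt


lemma ssyt_tail {r : List ℕ} {rs : List (List ℕ)} (h : IsSSYT (r :: rs)) : IsSSYT rs := by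
  obtain ⟨h1, h2, h3, h4⟩ := h
  refine ⟨fun a ha => h1 a (List.mem_cons_of_mem _ ha), fun i j a b ha hb => ?_,
    fun i => ?_, fun hc => h4 (List.mem_cons_of_mem _ hc)⟩
  · exact h2 (i+1) j a b (by rwa [List.getD_cons_succ]) (by rwa [List.getD_cons_succ])
  · have := h3 (i+1)
    rwa [List.getD_cons_succ, List.getD_cons_succ] at this

lemma rinsert_nil (x : ℕ) : rinsert [] x = ([[x]], 0) := rfl

lemma revBump_nil (v : ℕ) : revBump [] v = ([], v) := rfl

lemma rinsert_cons_none {r : List ℕ} {rs : List (List ℕ)} {x : ℕ}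
    (h : r.findIdx? (fun t => x < t) = none) :
    rinsert (r :: rs) x = ((r ++ [x]) :: rs, 0) := by
  simp [rinsert, h]

lemma rinsert_cons_some {r : List ℕ} {rs : List (List ℕ)} {x j : ℕ}
    (h : r.findIdx? (fun t => x < t) = some j) :
    rinsert (r :: rs) x = ((r.set j x) :: (rinsert rs (r.getD j 0)).1,
      (rinsert rs (r.getD j 0)).2 + 1) := by
  simp [rinsert, h]

lemma revBump_cons_k {a : List ℕ} {as : List (List ℕ)} {v k : ℕ}
    (hk : (a.takeWhile (fun t => t < v)).length = k + 1) :
    revBump (a :: as) v =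
      ((a.set k v) :: (revBump as (a.getD k 0)).1, (revBump as (a.getD k 0)).2) := by
  simp [revBump, hk]

lemma schDelete_def (T : List (List ℕ)) (i : ℕ) :
    schDelete T i = ((revBump (T.take i).reverse ((T.getD i []).getLastD 0)).1.reverse ++
      (if (T.getD i []).dropLast = [] then ([] : List (List ℕ)) else [(T.getD i []).dropLast])
      ++ T.drop (i + 1),
      (revBump (T.take i).reverse ((T.getD i []).getLastD 0)).2) := rfl

lemma fwd : ∀ (T : List (List ℕ)) (x : ℕ) (T' : List (List ℕ)) (i : ℕ),
    IsSSYT T → rinsert T x = (T', i) →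
    (∀ B : List (List ℕ), revBump ((T'.take i).reverse ++ B) ((T'.getD i []).getLastD 0)
        = ((T.take i).reverse ++ (revBump B x).1, (revBump B x).2)) ∧
    T'.drop (i+1) = T.drop (i+1) ∧
    ((if (T'.getD i []).dropLast = [] then ([] : List (List ℕ)) else [(T'.getD i []).dropLast])
        ++ T.drop (i+1) = T.drop i) := by
  intro T
  induction T with
  | nil =>
    intro x T' i _ heq
    rw [rinsert_nil] at heq
    injection heq with h1 h2
    subst h1; subst h2
    refine ⟨fun B => ?_, by simp, by simp⟩
    simp
  | cons r rs ih =>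
    intro x T' i hssyt heq
    have hrne : r ≠ [] := by intro h; exact hssyt.2.2.2 (by simp [h])
    rcases hfi : r.findIdx? (fun t => x < t) with _ | j
    · rw [rinsert_cons_none hfi] at heq
      injection heq with h1 h2
      subst h1; subst h2
      refine ⟨fun B => ?_, by simp, ?_⟩
      · simp [List.getLastD_concat]
      · simp [List.dropLast_concat, hrne]
    · have hj := List.findIdx?_eq_some_iff_findIdx_eq.mp hfi
      have jlt : j < r.length := hj.1
      have hfe := (List.findIdx_eq jlt).mp hj.2
      have hxj : x < r[j] := by simpa using hfe.1
      have hle : ∀ t (ht : t < j), r[t]'(lt_trans ht jlt) ≤ x := by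
        intro t ht
        have := hfe.2 t ht
        simpa using this
      rcases hP : rinsert rs (r.getD j 0) with ⟨P, i2⟩
      rw [rinsert_cons_some hfi, hP] at heq
      injection heq with h1 h2
      subst h1; subst h2
      obtain ⟨ih1, ih2, ih3⟩ := ih (r.getD j 0) P i2 (ssyt_tail hssyt) hP
      have hsort : List.Pairwise (· ≤ ·) r := hssyt.1 r List.mem_cons_self
      have hy : r.getD j 0 = r[j] := List.getD_eq_getElem r 0 jlt
      have hklen : ((r.set j x).takeWhile (fun t => t < r.getD j 0)).length = j + 1 := by
        have hlen : (r.set j x).length = r.length := List.length_set ..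
        have hk1 : ((r.set j x).takeWhile (fun t => t < r.getD j 0)).length ≤ j + 1 := by
          by_contra hcon
          push_neg at hcon
          have h2' := tw_prop (l := r.set j x) (t := j+1)
            (p := fun t => decide (t < r.getD j 0)) hcon
          have hj1 : j + 1 < r.length := by
            have := tw_le (fun t => decide (t < r.getD j 0)) (r.set j x)
            omega
          rw [getD_set_ne (by omega), List.getD_eq_getElem _ _ hj1] at h2'
          simp only [decide_eq_true_eq] at h2'
          have hmono : r[j] ≤ r[j+1] := by
            have := row_mono hsort (s := j) (t := j+1) (by omega) hj1
            rwa [List.getD_eq_getElem _ _ jlt, List.getD_eq_getElem _ _ hj1] at this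
          omega
        have hk2 : j + 1 ≤ ((r.set j x).takeWhile (fun t => t < r.getD j 0)).length := by
          by_contra hcon
          push_neg at hcon
          have hklt : ((r.set j x).takeWhile (fun t => decide (t < r.getD j 0))).length
              < (r.set j x).length := by omega
          have hb := tw_boundary hklt
          simp only [decide_eq_false_iff_not, not_lt] at hb
          rcases Nat.lt_or_ge
            ((r.set j x).takeWhile (fun t => decide (t < r.getD j 0))).length j with hkj | hkj
          · rw [getD_set_ne (Nat.ne_of_gt hkj)] at hb
            have h5 : r.getD ((r.set j x).takeWhile (fun t => decide (t < r.getD j 0))).length 0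
                ≤ x := by
              rw [List.getD_eq_getElem _ _ (by omega)]
              exact hle _ hkj
            omega
          · have hkj' : ((r.set j x).takeWhile (fun t => decide (t < r.getD j 0))).length = j := by
              omega
            rw [hkj', getD_set_self jlt] at hb
            omega
        omega
      have hsetx : (r.set j x).getD j 0 = x := getD_set_self jlt x
      have hsety : (r.set j x).set j (r.getD j 0) = r := by
        rw [List.set_set, hy, set_self r j jlt]
      refine ⟨fun B => ?_, ?_, ?_⟩
      · calc revBump (((r.set j x :: P).take (i2+1)).reverse ++ B)
              (((r.set j x :: P).getD (i2+1) []).getLastD 0)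
            = revBump ((P.take i2).reverse ++ ((r.set j x) :: B))
              ((P.getD i2 []).getLastD 0) := by
              rw [List.getD_cons_succ, List.take_succ_cons, List.reverse_cons,
                List.append_assoc]
              rfl
          _ = ((rs.take i2).reverse ++ (revBump ((r.set j x) :: B) (r.getD j 0)).1,
              (revBump ((r.set j x) :: B) (r.getD j 0)).2) := ih1 _
          _ = ((rs.take i2).reverse ++ (r :: (revBump B x).1), (revBump B x).2) := by
              rw [revBump_cons_k hklen, hsetx, hsety]
          _ = ((((r::rs).take (i2+1)).reverse ++ (revBump B x).1), (revBump B x).2) := by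
              rw [List.take_succ_cons, List.reverse_cons, List.append_assoc]
              rfl
      · simpa using ih2
      · simpa using ih3

lemma fwd_main {T T' : List (List ℕ)} {x i : ℕ} (hT : IsSSYT T)
    (h : rinsert T x = (T', i)) : schDelete T' i = (T, x) := by
  obtain ⟨h1, h2, h3⟩ := fwd T x T' i hT h
  have hb := h1 []
  rw [List.append_nil] at hb
  rw [schDelete_def, hb, h2]
  simp only [revBump_nil, List.append_nil, List.reverse_reverse]
  rw [List.append_assoc, h3, List.take_append_drop]



lemma tw_pos {l : List ℕ} (hs : List.Pairwise (· ≤ ·) l) {p v : ℕ} (hp : p < l.length)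
    (hv : l.getD p 0 < v) : p < (l.takeWhile (fun t => t < v)).length := by
  by_contra hcon
  push_neg at hcon
  have hklt : (l.takeWhile (fun t => decide (t < v))).length < l.length := by omega
  have hb := tw_boundary hklt
  simp only [decide_eq_false_iff_not, not_lt] at hb
  have hmm := row_mono hs hcon hp
  omega

lemma ssyt_col {T : List (List ℕ)} (h : IsSSYT T) {i j : ℕ}
    (h2 : j < (T.getD (i+1) []).length) :
    (T.getD i []).getD j 0 < (T.getD (i+1) []).getD j 0 := by
  have h1 : j < (T.getD i []).length := lt_of_lt_of_le h2 (h.2.2.1 i)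
  have hcol := h.2.1 i j _ _ (List.getElem?_eq_getElem h1) (List.getElem?_eq_getElem h2)
  rwa [List.getD_eq_getElem _ _ h1, List.getD_eq_getElem _ _ h2]

def RowChain (lower upper : List ℕ) : Prop :=
  lower.length ≤ upper.length ∧ ∀ t, t < lower.length → upper.getD t 0 < lower.getD t 0

lemma master : ∀ (A : List (List ℕ)) (v : ℕ),
    (∀ a ∈ A, List.Pairwise (· ≤ ·) a) →
    List.Chain' RowChain A →
    (∀ (h : A ≠ []), ∃ p, p < (A.head h).length ∧ (A.head h).getD p 0 < v) →
    (∀ B, revBump (A ++ B) v = ((revBump A v).1 ++ (revBump B (revBump A v).2).1,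
        (revBump B (revBump A v).2).2)) ∧
    (∀ (h : A ≠ []), ∃ q, q < (A.getLast h).length ∧
        (revBump A v).2 = (A.getLast h).getD q 0) := by
  intro A
  induction A with
  | nil =>
    intro v _ _ _
    exact ⟨fun B => by simp [revBump_nil], fun h => absurd rfl h⟩
  | cons a as ih =>
    intro v hsort hchain hinit
    obtain ⟨p, hp, hpv⟩ := hinit (by simp)
    rw [List.head_cons] at hp hpv
    have hsa : List.Pairwise (· ≤ ·) a := hsort a (by simp)
    have hkpos := tw_pos hsa hp hpv
    have hkle := tw_le (fun t => decide (t < v)) a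
    obtain ⟨k, hkeq⟩ : ∃ k, (a.takeWhile (fun t => t < v)).length = k + 1 :=
      ⟨(a.takeWhile (fun t => t < v)).length - 1, by omega⟩
    have hklt : k < a.length := by omega
    have hbump : ∀ L, revBump (a :: L) v =
        ((a.set k v) :: (revBump L (a.getD k 0)).1, (revBump L (a.getD k 0)).2) :=
      fun L => revBump_cons_k hkeq
    rcases as with _ | ⟨a', as'⟩
    · refine ⟨fun B => ?_, fun h => ⟨k, hklt, ?_⟩⟩
      · rw [List.cons_append, hbump, hbump]
        simp [revBump_nil]
      · rw [hbump]
        simp [revBump_nil]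
    · obtain ⟨hrc, hch'⟩ := List.isChain_cons_cons.mp hchain
      have hinit' : ∀ (h : (a'::as') ≠ []), ∃ p, p < ((a'::as').head h).length ∧
          ((a'::as').head h).getD p 0 < a.getD k 0 := by
        intro h
        refine ⟨k, ?_, ?_⟩
        · rw [List.head_cons]
          exact lt_of_lt_of_le hklt hrc.1
        · rw [List.head_cons]
          exact hrc.2 k hklt
      obtain ⟨c1, c2⟩ := ih (a.getD k 0) (fun b hb => hsort b (by simp [hb])) hch' hinit'
      refine ⟨fun B => ?_, fun h => ?_⟩
      · rw [List.cons_append, hbump, hbump, c1 B]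
        simp
      · rw [List.getLast_cons (by simp), hbump]
        exact c2 (by simp)

lemma bwd : ∀ (i : ℕ) (T' : List (List ℕ)), IsSSYT T' →
    (T'.getD (i+1) []).length < (T'.getD i []).length →
    rinsert (schDelete T' i).1 (schDelete T' i).2 = (T', i) := by
  intro i
  induction i with
  | zero =>
    intro T' hss hlen
    rcases T' with _ | ⟨t0, rest⟩
    · simp at hlen
    rw [List.getD_cons_zero, List.getD_cons_succ] at hlen
    rcases List.eq_nil_or_concat t0 with h | ⟨d, m, ht0⟩
    · subst h; simp at hlen
    rw [List.concat_eq_append] at ht0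
    subst ht0
    rw [schDelete_def]
    simp only [List.take_zero, List.reverse_nil, revBump_nil, List.getD_cons_zero,
      List.drop_succ_cons, List.drop_zero, List.nil_append]
    rw [List.getLastD_concat, List.dropLast_concat]
    by_cases hd : d = []
    · subst hd
      have hrest : rest = [] := by
        rcases rest with _ | ⟨r1, rest'⟩
        · rfl
        · exfalso
          rw [List.getD_cons_zero] at hlen
          simp only [List.nil_append, List.length_cons, List.length_nil] at hlen
          have hr1 : r1 = [] := List.eq_nil_of_length_eq_zero (by omega)
          exact hss.2.2.2 (by simp [hr1])
      subst hrest
      simp [rinsert_nil]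
    · rw [if_neg hd]
      have hnone : d.findIdx? (fun t => m < t) = none := by
        rw [List.findIdx?_eq_none_iff]
        intro e he
        have hsor : List.Pairwise (· ≤ ·) (d ++ [m]) := hss.1 _ (by simp)
        have hem := (List.pairwise_append.mp hsor).2.2 e he m (by simp)
        simpa using Nat.not_lt.mpr hem
      rw [show ([d] ++ rest : List (List ℕ)) = d :: rest from rfl]
      rw [rinsert_cons_none hnone]
  | succ i ihi =>
    intro T' hss hlen
    rcases T' with _ | ⟨t0, rest⟩
    · simp at hlen
    rw [List.getD_cons_succ, List.getD_cons_succ] at hlen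
    have hss' := ssyt_tail hss
    have ihr := ihi rest hss' hlen
    have hposlen : 0 < (rest.getD i []).length := by omega
    have hrne : rest.getD i [] ≠ [] := List.ne_nil_of_length_pos hposlen
    have hilt : i < rest.length := by
      by_contra hcon
      push_neg at hcon
      rw [List.getD_eq_default _ _ hcon] at hposlen
      simp at hposlen
    have hgetD : ∀ m (hm : m < rest.length), rest[m] = rest.getD m [] :=
      fun m hm => (List.getD_eq_getElem rest [] hm).symm
    have hsA : ∀ a ∈ (rest.take i).reverse, List.Pairwise (· ≤ ·) a := by
      intro a ha
      rw [List.mem_reverse] at ha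
      exact hss'.1 a (List.mem_of_mem_take ha)
    have hcA : List.Chain' RowChain (rest.take i).reverse := by
      rw [List.Chain', List.isChain_reverse, List.isChain_iff_getElem]
      intro m hm
      rw [List.length_take] at hm
      have hm1 : m + 1 < rest.length := by omega
      simp only [List.get_eq_getElem, List.getElem_take]
      show RowChain rest[m + 1] rest[m]
      rw [hgetD m (by omega), hgetD (m+1) hm1]
      exact ⟨hss'.2.2.1 m, fun t ht => ssyt_col hss' ht⟩
    have hinitA : ∀ (h : (rest.take i).reverse ≠ []),
        ∃ p, p < (((rest.take i).reverse).head h).length ∧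
        (((rest.take i).reverse).head h).getD p 0 < (rest.getD i []).getLastD 0 := by
      intro h
      have hine : i ≠ 0 := by rintro rfl; simp at h
      obtain ⟨i', rfl⟩ := Nat.exists_eq_succ_of_ne_zero hine
      simp only [Nat.succ_eq_add_one] at hrne hlen ⊢
      have hA0 : (rest.take (i'+1)).reverse = rest.getD i' [] :: (rest.take i').reverse := by
        rw [List.take_succ, List.getElem?_eq_getElem (show i' < rest.length by omega)]
        simp [hgetD i' (by omega)]
      have hiv := getLastD_eq_getD hrne
      refine ⟨(rest.getD (i'+1) []).length - 1, ?_, ?_⟩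
      · simp only [Nat.succ_eq_add_one, hA0, List.head_cons]
        have hl := hss'.2.2.1 i'
        omega
      · simp only [Nat.succ_eq_add_one, hA0, List.head_cons]
        rw [hiv]
        exact ssyt_col hss' (by omega)
    obtain ⟨c1, c2⟩ := master ((rest.take i).reverse) ((rest.getD i []).getLastD 0) hsA hcA hinitA
    rcases hQ : revBump (rest.take i).reverse ((rest.getD i []).getLastD 0) with ⟨Q, y⟩
    have hlen01 : (rest.getD 0 []).length ≤ t0.length := by
      have h01 := hss.2.2.1 0
      rwa [List.getD_cons_succ, List.getD_cons_zero] at h01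
    have hcol01 : ∀ q, q < (rest.getD 0 []).length →
        t0.getD q 0 < (rest.getD 0 []).getD q 0 := by
      intro q hq
      have hcol := ssyt_col hss (i := 0) (j := q) (by rwa [List.getD_cons_succ])
      rwa [List.getD_cons_zero, List.getD_cons_succ] at hcol
    have hyent : ∃ p, p < t0.length ∧ t0.getD p 0 < y := by
      rcases Nat.eq_zero_or_pos i with rfl | hipos
      · rw [List.take_zero, List.reverse_nil, revBump_nil] at hQ
        injection hQ with hQ1 hQ2
        refine ⟨(rest.getD 0 []).length - 1, by omega, ?_⟩
        rw [← hQ2, getLastD_eq_getD hrne]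
        exact hcol01 _ (by omega)
      · have hA0ne : (rest.take i).reverse ≠ [] := by
          apply List.ne_nil_of_length_pos
          rw [List.length_reverse, List.length_take]
          omega
        obtain ⟨q, hq, hyq⟩ := c2 hA0ne
        rw [hQ] at hyq
        dsimp only at hyq
        have hlastA0 : (rest.take i).reverse.getLast hA0ne = rest.getD 0 [] := by
          rw [List.getLast_reverse, List.head_take]
          rcases rest with _ | ⟨r0, rr⟩
          · simp at hilt
          · simp
        rw [hlastA0] at hq hyq
        exact ⟨q, by omega, by rw [hyq]; exact hcol01 q hq⟩

    obtain ⟨pp, hpp, hppv⟩ := hyent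
    have hst0 : List.Pairwise (· ≤ ·) t0 := hss.1 t0 (by simp)
    have hkkpos := tw_pos hst0 hpp hppv
    have hkkle := tw_le (fun t => decide (t < y)) t0
    obtain ⟨kk, hkkeq⟩ : ∃ kk, (t0.takeWhile (fun t => t < y)).length = kk + 1 :=
      ⟨(t0.takeWhile (fun t => t < y)).length - 1, by omega⟩
    have hkklt : kk < t0.length := by omega
    have htkk : t0.getD kk 0 < y := by
      have hq := tw_prop (p := fun t => decide (t < y)) (l := t0) (t := kk) (by omega)
      simpa using hq
    have hsd2 : (schDelete rest i).2 = y := by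
      rw [schDelete_def, hQ]

    have hsd : schDelete (t0::rest) (i+1) =
        (t0.set kk y :: (schDelete rest i).1, t0.getD kk 0) := by
      rw [schDelete_def, schDelete_def]
      rw [List.take_succ_cons, List.reverse_cons, List.getD_cons_succ, List.drop_succ_cons]
      rw [c1 [t0], hQ]
      dsimp only
      rw [revBump_cons_k hkkeq, revBump_nil]
      simp [List.reverse_append]
    rw [hsd]
    have hfind : (t0.set kk y).findIdx? (fun t => t0.getD kk 0 < t) = some kk := by
      apply findIdx?_eq_some_of
      · rw [List.length_set]; omega
      · rw [getD_set_self hkklt]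
        simpa using htkk
      · intro t ht
        rw [getD_set_ne (by omega)]
        simp only [decide_eq_false_iff_not, not_lt]
        exact row_mono hst0 (by omega) hkklt
    rw [rinsert_cons_some hfind]
    rw [getD_set_self hkklt]
    rw [hsd2] at ihr
    rw [ihr]
    rw [List.set_set, List.getD_eq_getElem _ _ hkklt, set_self _ _ hkklt]

end SchenstedAux

/-- Schensted insertion and deletion are mutually inverse. -/
theorem insert_delete_inverse (T T' : List (List ℕ)) (x i : ℕ) (hT : IsSSYT T) :
    (rinsert T x = (T', i) → schDelete T' i = (T, x)) ∧
    (IsSSYT T' → (T'.getD (i + 1) []).length < (T'.getD i []).length →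
      schDelete T' i = (T, x) → rinsert T x = (T', i)) := by
  constructor
  · intro h
    exact SchenstedAux.fwd_main hT h
  · intro h1 h2 h3
    have hb := SchenstedAux.bwd i T' h1 h2
    rw [h3] at hb
    exact hb
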